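/- Let r = [a_0; a_1, …, a_n] be a Landess (σ,k)-permutiple and let s = [b_0; b_1, …, b_m] be a continuant-preserving (τ,k)-permutiple (same multiplier k). Define the permutation π of {0, 1, …, n+m+1} by π(j) = σ(j) for 0 ≤ j ≤ n and π(n+1+j) = n+1+τ(j) for 0 ≤ j ≤ m. Then the concatenation r ∘ s = [a_0; a_1, …, a_n, b_0, b_1, …, b_m] is a continuant-preserving (π,k)-permutiple; in particular r ∘ s = k·(r' ∘ s'), where r' = [a_{σ(0)}; …, a_{σ(n)}] and s' = [b_{τ(0)}; …, b_{τ(m)}]. -/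

import Mathlib

/-- Value of the finite simple continued fraction `[x₀; x₁, …, xₙ]`. -/
def cfv : List ℚ → ℚ
  | [] => 0
  | [x] => x
  | x :: y :: t => x + 1 / cfv (y :: t)

/-- The continuant `K(x₀, …, xₙ)`: `K() = 1`, `K(x₀) = x₀`, and the usual
three-term recurrence. -/
def cont : List ℕ → ℕ
  | [] => 1
  | [x] => x
  | x :: y :: t => x * cont (y :: t) + cont t

/-- The digit string of `a`, as a list of rationals. -/
def digitsQ {N : ℕ} (a : Fin N → ℕ) : List ℚ := (List.ofFn a).map (fun x => (x : ℚ))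

/-- `[a₀; a₁, …, aₙ]` (canonical: positive digits, last digit ≥ 2) is a
`(σ,k)`-permutiple: it equals `k` times the continued fraction of the permuted digits. -/
def IsPermutiple {n : ℕ} (a : Fin (n+1) → ℕ) (σ : Equiv.Perm (Fin (n+1))) (k : ℕ) : Prop :=
  (∀ j, 0 < a j) ∧ 2 ≤ a (Fin.last n) ∧ 1 < k ∧
    cfv (digitsQ a) = k * cfv (digitsQ (a ∘ σ))

/-- A `(σ,k)`-permutiple is continuant-preserving if
`K(a₀,…,aₙ) = K(a_{σ(0)},…,a_{σ(n)})`. -/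
def ContinuantPreserving {n : ℕ} (a : Fin (n+1) → ℕ) (σ : Equiv.Perm (Fin (n+1))) : Prop :=
  cont (List.ofFn a) = cont (List.ofFn (a ∘ σ))

/-- A `(σ,k)`-permutiple is perfect if `a_j = k·a_{σ(j)}` for even `j` and
`a_{σ(j)} = k·a_j` for odd `j`. -/
def IsPerfect {n : ℕ} (a : Fin (n+1) → ℕ) (σ : Equiv.Perm (Fin (n+1))) (k : ℕ) : Prop :=
  ∀ j : Fin (n+1), (Even (j : ℕ) → a j = k * a (σ j)) ∧ (Odd (j : ℕ) → a (σ j) = k * a j)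

/-- A `(σ,k)`-permutiple is symmetric if `a_j·a_{n−j} = a_{σ(j)}·a_{σ(n−j)}` for all `j`. -/
def IsSymmetric {n : ℕ} (a : Fin (n+1) → ℕ) (σ : Equiv.Perm (Fin (n+1))) : Prop :=
  ∀ j : Fin (n+1), a j * a j.rev = a (σ j) * a (σ j.rev)

/-- A Landess permutiple: a continuant-preserving `(σ,k)`-permutiple with
`q_{n−1} = q'_{n−1}` and `p_{n−1} = k·p'_{n−1}`. -/
def IsLandess {n : ℕ} (a : Fin (n+1) → ℕ) (σ : Equiv.Perm (Fin (n+1))) (k : ℕ) : Prop :=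
  IsPermutiple a σ k ∧ ContinuantPreserving a σ ∧
    cont ((List.ofFn a).tail.dropLast) = cont ((List.ofFn (a ∘ σ)).tail.dropLast) ∧
    cont ((List.ofFn a).dropLast) = k * cont ((List.ofFn (a ∘ σ)).dropLast)

theorem cont_pos : ∀ (L : List ℕ), (∀ x ∈ L, 0 < x) → 0 < cont L
  | [], _ => Nat.one_pos
  | [x], h => h x (by simp)
  | x :: y :: t, h => by
      have h1 := cont_pos (y :: t) (fun z hz => h z (by simp [hz]))
      have h2 := h x (by simp)
      show 0 < x * cont (y :: t) + cont t
      exact Nat.lt_of_lt_of_le (Nat.mul_pos h2 h1) (Nat.le_add_right _ _)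

theorem cont_append : ∀ (A B : List ℕ), A ≠ [] → B ≠ [] →
    cont (A ++ B) = cont A * cont B + cont A.dropLast * cont B.tail
  | [], _, hA, _ => absurd rfl hA
  | [x], b :: bs, _, _ => by
      show cont (x :: b :: bs) = cont [x] * cont (b :: bs) + cont [] * cont bs
      simp [cont]
  | [x, y], b :: bs, _, _ => by
      show cont (x :: y :: b :: bs) = cont [x, y] * cont (b :: bs) + cont [x] * cont bs
      simp [cont]; ring
  | x :: y :: z :: t, b :: bs, _, _ => by
      have h1 := cont_append (y :: z :: t) (b :: bs) (by simp) (by simp)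
      have h2 := cont_append (z :: t) (b :: bs) (by simp) (by simp)
      show x * cont ((y :: z :: t) ++ (b :: bs)) + cont ((z :: t) ++ (b :: bs)) = _
      rw [h1, h2]
      simp only [List.dropLast_cons₂, List.tail_cons, cont]
      ring

theorem cfv_eq : ∀ (L : List ℕ), L ≠ [] → (∀ x ∈ L, 0 < x) →
    cfv (L.map (Nat.cast : ℕ → ℚ)) = (cont L : ℚ) / (cont L.tail : ℚ)
  | [], h, _ => absurd rfl h
  | [x], _, _ => by simp [cfv, cont]
  | x :: y :: t, _, h => by
      have hp : ∀ z ∈ y :: t, 0 < z := fun z hz => h z (by simp [hz])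
      have ih := cfv_eq (y :: t) (by simp) hp
      have h1 : 0 < cont (y :: t) := cont_pos _ hp
      have h2 : 0 < cont t := cont_pos t (fun z hz => hp z (by simp [hz]))
      have h1' : ((cont (y :: t) : ℚ)) ≠ 0 := by exact_mod_cast h1.ne'
      show (x : ℚ) + 1 / cfv ((y :: t).map (Nat.cast : ℕ → ℚ)) = _
      rw [ih]
      show _ = ((x * cont (y :: t) + cont t : ℕ) : ℚ) / (cont (y :: t) : ℚ)
      push_cast
      field_simp
      rfl


theorem digitsQ_eq {N : ℕ} (a : Fin N → ℕ) :
    digitsQ a = (List.ofFn a).map (Nat.cast : ℕ → ℚ) := by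
  simp only [digitsQ]
  rw [show ((List.ofFn a : List ℕ) : List ℚ)
      = (List.ofFn a).flatMap (pure ∘ (Nat.cast : ℕ → ℚ)) from rfl,
    List.flatMap_pure_eq_map, List.map_map]
  rfl

/-- The concatenation of a Landess `(σ,k)`-permutiple `r` with a
continuant-preserving `(τ,k)`-permutiple `s` is a continuant-preserving
`(π,k)`-permutiple, where `π` acts as `σ` on the first block of indices and as
`τ` on the second; in particular `r ∘ s = k·(r' ∘ s')`. -/
theorem stmt16 {n m : ℕ} (a : Fin (n+1) → ℕ) (b : Fin (m+1) → ℕ)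
    (σ : Equiv.Perm (Fin (n+1))) (τ : Equiv.Perm (Fin (m+1))) (k : ℕ)
    (hr : IsLandess a σ k)
    (hs : IsPermutiple b τ k) (hsC : ContinuantPreserving b τ) :
    IsPermutiple (n := n+1+m) ((Fin.append a b : Fin ((n+1)+(m+1)) → ℕ))
        ((finSumFinEquiv.permCongr (Equiv.sumCongr σ τ) : Equiv.Perm (Fin ((n+1)+(m+1))))) k ∧
      ContinuantPreserving (n := n+1+m) ((Fin.append a b : Fin ((n+1)+(m+1)) → ℕ))
        ((finSumFinEquiv.permCongr (Equiv.sumCongr σ τ) : Equiv.Perm (Fin ((n+1)+(m+1))))) := by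
  obtain ⟨⟨ha_pos, ha_last, hk, ha_cfv⟩, haC, hqm, hpm⟩ := hr
  obtain ⟨hb_pos, hb_last, -, hb_cfv⟩ := hs
  set π := (finSumFinEquiv.permCongr (Equiv.sumCongr σ τ) : Equiv.Perm (Fin ((n+1)+(m+1)))) with hπdef
  have hπ : (Fin.append a b : Fin ((n+1)+(m+1)) → ℕ) ∘ π = Fin.append (a ∘ σ) (b ∘ τ) := by
    funext x
    obtain ⟨s, rfl⟩ := finSumFinEquiv.surjective x
    cases s with
    | inl i =>
        simp [hπdef, Equiv.permCongr_apply, finSumFinEquiv_apply_left, Fin.append_left]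
    | inr i =>
        simp [hπdef, Equiv.permCongr_apply, finSumFinEquiv_apply_right, Fin.append_right]
  set A := List.ofFn a with hAdef
  set A' := List.ofFn (a ∘ σ) with hA'def
  set B := List.ofFn b with hBdef
  set B' := List.ofFn (b ∘ τ) with hB'def
  have hAB : List.ofFn (Fin.append a b) = A ++ B := List.ofFn_fin_append a b
  have hAB' : List.ofFn ((Fin.append a b : Fin ((n+1)+(m+1)) → ℕ) ∘ π) = A' ++ B' := by
    rw [hπ]; exact List.ofFn_fin_append _ _
  rw [digitsQ_eq, digitsQ_eq, ← hAdef, ← hA'def] at ha_cfv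
  rw [digitsQ_eq, digitsQ_eq, ← hBdef, ← hB'def] at hb_cfv
  have posA : ∀ x ∈ A, 0 < x := by
    intro x hx; rw [hAdef, List.mem_ofFn] at hx
    obtain ⟨i, rfl⟩ := hx; exact ha_pos i
  have posA' : ∀ x ∈ A', 0 < x := by
    intro x hx; rw [hA'def, List.mem_ofFn] at hx
    obtain ⟨i, rfl⟩ := hx; exact ha_pos (σ i)
  have posB : ∀ x ∈ B, 0 < x := by
    intro x hx; rw [hBdef, List.mem_ofFn] at hx
    obtain ⟨i, rfl⟩ := hx; exact hb_pos i
  have posB' : ∀ x ∈ B', 0 < x := by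
    intro x hx; rw [hB'def, List.mem_ofFn] at hx
    obtain ⟨i, rfl⟩ := hx; exact hb_pos (τ i)
  have hA_ne : A ≠ [] := by rw [hAdef]; simp [← List.length_pos_iff]
  have hA'_ne : A' ≠ [] := by rw [hA'def]; simp [← List.length_pos_iff]
  have hB_ne : B ≠ [] := by rw [hBdef]; simp [← List.length_pos_iff]
  have hB'_ne : B' ≠ [] := by rw [hB'def]; simp [← List.length_pos_iff]
  have hp : cont A = cont A' := haC
  have hP : cont B = cont B' := hsC
  -- positivity of various continuants
  have pA : 0 < cont A := cont_pos A posA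
  have pAt : 0 < cont A.tail := cont_pos _ (fun x hx => posA x (List.mem_of_mem_tail hx))
  have pA't : 0 < cont A'.tail := cont_pos _ (fun x hx => posA' x (List.mem_of_mem_tail hx))
  have pB : 0 < cont B := cont_pos B posB
  have pBt : 0 < cont B.tail := cont_pos _ (fun x hx => posB x (List.mem_of_mem_tail hx))
  have pB't : 0 < cont B'.tail := cont_pos _ (fun x hx => posB' x (List.mem_of_mem_tail hx))
  -- derive q' = k q from the cfv equation for a
  have ha_cfv' : (cont A : ℚ) / (cont A.tail : ℚ)
      = k * ((cont A' : ℚ) / (cont A'.tail : ℚ)) := by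
    rw [cfv_eq A hA_ne posA, cfv_eq A' hA'_ne posA'] at ha_cfv
    exact ha_cfv
  have hq : cont A'.tail = k * cont A.tail := by
    have h0 : (cont A : ℚ) ≠ 0 := by exact_mod_cast pA.ne'
    have h1 : (cont A.tail : ℚ) ≠ 0 := by exact_mod_cast pAt.ne'
    have h2 : (cont A'.tail : ℚ) ≠ 0 := by exact_mod_cast pA't.ne'
    rw [← hp] at ha_cfv'
    field_simp at ha_cfv'
    have : (cont A'.tail : ℚ) = k * cont A.tail := by
      apply mul_left_cancel₀ h0
      linear_combination (cont A : ℚ) * ha_cfv'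
    exact_mod_cast this
  have hb_cfv' : (cont B : ℚ) / (cont B.tail : ℚ)
      = k * ((cont B' : ℚ) / (cont B'.tail : ℚ)) := by
    rw [cfv_eq B hB_ne posB, cfv_eq B' hB'_ne posB'] at hb_cfv
    exact hb_cfv
  have hQ : cont B'.tail = k * cont B.tail := by
    have h0 : (cont B : ℚ) ≠ 0 := by exact_mod_cast pB.ne'
    have h1 : (cont B.tail : ℚ) ≠ 0 := by exact_mod_cast pBt.ne'
    have h2 : (cont B'.tail : ℚ) ≠ 0 := by exact_mod_cast pB't.ne'
    rw [← hP] at hb_cfv'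
    field_simp at hb_cfv'
    have : (cont B'.tail : ℚ) = k * cont B.tail := by
      apply mul_left_cancel₀ h0
      linear_combination (cont B : ℚ) * hb_cfv'
    exact_mod_cast this
  -- n must be positive
  have hn : 0 < n := by
    by_contra h
    push_neg at h
    have hn0 : n = 0 := Nat.le_zero.mp h
    have e1 : A.tail = [] := by
      apply List.eq_nil_of_length_eq_zero
      rw [hAdef]; simp [hn0]
    have e2 : A'.tail = [] := by
      apply List.eq_nil_of_length_eq_zero
      rw [hA'def]; simp [hn0]
    rw [e1, e2] at hq
    simp [cont] at hq
    omega
  have hAt_ne : A.tail ≠ [] := by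
    have h1 : A.tail.length = n := by rw [hAdef]; simp
    intro h; rw [h] at h1; simp at h1; omega
  have hA't_ne : A'.tail ≠ [] := by
    have h1 : A'.tail.length = n := by rw [hA'def]; simp
    intro h; rw [h] at h1; simp at h1; omega
  -- list facts about the concatenation
  have posAB : ∀ x ∈ A ++ B, 0 < x := by
    intro x hx; rcases List.mem_append.mp hx with h | h
    exacts [posA x h, posB x h]
  have posAB' : ∀ x ∈ A' ++ B', 0 < x := by
    intro x hx; rcases List.mem_append.mp hx with h | h
    exacts [posA' x h, posB' x h]
  have hABne : A ++ B ≠ [] := fun h => hA_ne (List.append_eq_nil_iff.mp h).1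
  have hABne' : A' ++ B' ≠ [] := fun h => hA'_ne (List.append_eq_nil_iff.mp h).1
  have cAB : cont (A ++ B) = cont A * cont B + cont A.dropLast * cont B.tail :=
    cont_append A B hA_ne hB_ne
  have cAB' : cont (A' ++ B') = cont A' * cont B' + cont A'.dropLast * cont B'.tail :=
    cont_append A' B' hA'_ne hB'_ne
  have tAB : (A ++ B).tail = A.tail ++ B := List.tail_append_of_ne_nil hA_ne
  have tAB' : (A' ++ B').tail = A'.tail ++ B' := List.tail_append_of_ne_nil hA'_ne
  have ctAB : cont (A.tail ++ B)
      = cont A.tail * cont B + cont A.tail.dropLast * cont B.tail :=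
    cont_append _ B hAt_ne hB_ne
  have ctAB' : cont (A'.tail ++ B')
      = cont A'.tail * cont B' + cont A'.tail.dropLast * cont B'.tail :=
    cont_append _ B' hA't_ne hB'_ne
  have D1 : 0 < cont A.tail * cont B + cont A.tail.dropLast * cont B.tail :=
    Nat.lt_of_lt_of_le (Nat.mul_pos pAt pB) (Nat.le_add_right _ _)
  have D2 : 0 < k * cont A.tail * cont B + cont A.tail.dropLast * (k * cont B.tail) :=
    Nat.lt_of_lt_of_le (Nat.mul_pos (Nat.mul_pos (by omega) pAt) pB) (Nat.le_add_right _ _)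
  refine ⟨⟨?_, ?_, hk, ?_⟩, ?_⟩
  · -- positivity of digits
    intro j
    obtain ⟨s, rfl⟩ := (finSumFinEquiv (m := n+1) (n := m+1)).surjective j
    cases s with
    | inl i =>
        rw [finSumFinEquiv_apply_left, Fin.append_left]; exact ha_pos i
    | inr i =>
        rw [finSumFinEquiv_apply_right, Fin.append_right]; exact hb_pos i
  · -- last digit ≥ 2
    show 2 ≤ Fin.append a b (Fin.natAdd (n+1) (Fin.last m))
    rw [Fin.append_right]
    exact hb_last
  · -- the cfv identity
    have final : cfv (digitsQ (Fin.append a b))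
        = k * cfv (digitsQ ((Fin.append a b : Fin ((n+1)+(m+1)) → ℕ) ∘ π)) := by
      rw [digitsQ_eq, digitsQ_eq, hAB, hAB', cfv_eq _ hABne posAB, cfv_eq _ hABne' posAB',
        tAB, tAB', cAB, cAB', ctAB, ctAB', ← hp, ← hP, hq, hQ, ← hqm, hpm,
        ← mul_div_assoc, div_eq_div_iff (by exact_mod_cast D1.ne') (by exact_mod_cast D2.ne')]
      push_cast
      ring
    exact final
  · -- continuant preservation
    have finalC : cont (List.ofFn (Fin.append a b))
        = cont (List.ofFn ((Fin.append a b : Fin ((n+1)+(m+1)) → ℕ) ∘ π)) := by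
      rw [hAB, hAB', cAB, cAB', ← hp, ← hP, hQ, hpm]
      ring
    exact finalC
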